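/- Let H, R be finite-dimensional complex Hilbert spaces, B = ℂ², |ψ⟩ a unit vector in H⊗B⊗R, and η ∈ [0,1]. If there exists a (1, 1−η)-superdense decoder against |ψ⟩, then the candidate EFI pair (ρ̄₀, ρ̄₁) built from |ψ⟩ is statistically distinguishable with advantage at least (3/4)(1−η): there exists a matrix M on B⊗R⊗ℂ⁴ with 0 ≤ M ≤ I such that Tr[M(ρ̄₁ − ρ̄₀)] ≥ (3/4)(1−η). -/

import Mathlib

open Matrix BigOperators
open scoped ComplexOrder

noncomputable section

namespace BHRD

/-- A (qu)bit index. -/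
abbrev Bit := ZMod 2

/-- The Pauli `X` matrix. -/
def Xm : Matrix Bit Bit ℂ := Matrix.of fun i j => if i = j + 1 then 1 else 0

/-- The Pauli `Z` matrix. -/
def Zm : Matrix Bit Bit ℂ := Matrix.of fun i j => if i = j then (if j = 1 then -1 else 1) else 0

/-- The Pauli mask `X^x Z^z`. -/
def pauli (x z : Bit) : Matrix Bit Bit ℂ := Xm ^ x.val * Zm ^ z.val

/-- The EPR vector `(|00⟩+|11⟩)/√2`. -/
def epr : Bit × Bit → ℂ := fun p => if p.1 = p.2 then (((Real.sqrt 2 : ℝ) : ℂ))⁻¹ else 0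

variable {dH dR : ℕ}

/-- The reduced density matrix of `|ψ⟩ ∈ H ⊗ B ⊗ R` on `B ⊗ R`, i.e. `Tr_H |ψ⟩⟨ψ|`. -/
def rhoBR (ψ : Fin dH × Bit × Fin dR → ℂ) :
    Matrix (Bit × Fin dR) (Bit × Fin dR) ℂ :=
  Matrix.of fun p q => ∑ h : Fin dH, ψ (h, p) * (starRingEnd ℂ) (ψ (h, q))

/-- `(X^x Z^z) ⊗ I_R` acting on `B ⊗ R`. -/
def maskB (dR : ℕ) (x z : Bit) : Matrix (Bit × Fin dR) (Bit × Fin dR) ℂ :=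
  Matrix.of fun p q => if p.2 = q.2 then pauli x z p.1 q.1 else 0

/-- The masked state `ρ^{xz} = (X^x Z^z ⊗ I) Tr_H|ψ⟩⟨ψ| (X^x Z^z ⊗ I)†`. -/
def rhoXZ (ψ : Fin dH × Bit × Fin dR → ℂ) (x z : Bit) :
    Matrix (Bit × Fin dR) (Bit × Fin dR) ℂ :=
  maskB dR x z * rhoBR ψ * (maskB dR x z)ᴴ

/-- `K` is a family of Kraus operators for a (trace-preserving) quantum channel. -/
def IsKraus {α β : Type*} [Fintype α] [Fintype β] [DecidableEq β] {k : ℕ}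
    (K : Fin k → Matrix α β ℂ) : Prop :=
  ∑ i, (K i)ᴴ * K i = 1

/-- Application of the channel with Kraus operators `K` to a state `ρ`. -/
def applyCh {α β : Type*} [Fintype α] [Fintype β] {k : ℕ}
    (K : Fin k → Matrix α β ℂ) (ρ : Matrix β β ℂ) : Matrix α α ℂ :=
  ∑ i, K i * ρ * (K i)ᴴ

/-- The extension `id_B ⊗ A` of a channel `A : R → D ⊗ F` given by a Kraus operator `K`:
a Kraus operator from `B ⊗ R` to `B ⊗ D ⊗ F`. -/
def extB (K : Matrix (Bit × Bit) (Fin dR) ℂ) :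
    Matrix (Bit × Bit × Bit) (Bit × Fin dR) ℂ :=
  Matrix.of fun p q => if p.1 = q.1 then K p.2 q.2 else 0

/-- The projector `I_{B⊗D} ⊗ |0⟩⟨0|_F` on `B ⊗ D ⊗ F`. -/
def PF0 : Matrix (Bit × Bit × Bit) (Bit × Bit × Bit) ℂ :=
  Matrix.of fun p q =>
    if p.1 = q.1 ∧ p.2.1 = q.2.1 ∧ p.2.2 = 0 ∧ q.2.2 = 0 then 1 else 0

/-- The projector `|epr⟩⟨epr|_{B⊗D} ⊗ |0⟩⟨0|_F` on `B ⊗ D ⊗ F`. -/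
def Pepr0 : Matrix (Bit × Bit × Bit) (Bit × Bit × Bit) ℂ :=
  Matrix.of fun p q =>
    (if p.2.2 = 0 ∧ q.2.2 = 0 then 1 else 0) *
      (epr (p.1, p.2.1) * (starRingEnd ℂ) (epr (q.1, q.2.1)))

/-- `K` is (the Kraus family of) a `(γ,ε)`-radiation decoder against `ψ`. -/
def IsRadDecoder (ψ : Fin dH × Bit × Fin dR → ℂ) (γ ε : ℝ) {k : ℕ}
    (K : Fin k → Matrix (Bit × Bit) (Fin dR) ℂ) : Prop :=
  IsKraus K ∧
  γ ≤ ((PF0 * applyCh (fun i => extB (K i)) (rhoBR ψ)).trace).re ∧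
  ((PF0 * applyCh (fun i => extB (K i)) (rhoBR ψ)).trace).re * (1/4 + (3/4) * ε) ≤
    ((Pepr0 * applyCh (fun i => extB (K i)) (rhoBR ψ)).trace).re

/-- The projector `I_P ⊗ |0⟩⟨0|_F` on `P ⊗ F`. -/
def QF0 : Matrix ((Bit × Bit) × Bit) ((Bit × Bit) × Bit) ℂ :=
  Matrix.of fun p q => if p.1 = q.1 ∧ p.2 = 0 ∧ q.2 = 0 then 1 else 0

/-- The projector `|x,z⟩⟨x,z|_P ⊗ |0⟩⟨0|_F` on `P ⊗ F`. -/
def Qxz0 (x z : Bit) : Matrix ((Bit × Bit) × Bit) ((Bit × Bit) × Bit) ℂ :=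
  Matrix.of fun p q => if p = ((x, z), 0) ∧ q = ((x, z), 0) then 1 else 0

/-- `K` is (the Kraus family of) a `(γ,ε)`-superdense decoder against `ψ`. -/
def IsSupDecoder (ψ : Fin dH × Bit × Fin dR → ℂ) (γ ε : ℝ) {k : ℕ}
    (K : Fin k → Matrix ((Bit × Bit) × Bit) (Bit × Fin dR) ℂ) : Prop :=
  IsKraus K ∧
  γ ≤ (1/4) * ∑ x : Bit, ∑ z : Bit, ((QF0 * applyCh K (rhoXZ ψ x z)).trace).re ∧
  ((1/4) * ∑ x : Bit, ∑ z : Bit, ((QF0 * applyCh K (rhoXZ ψ x z)).trace).re) *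
      (1/4 + (3/4) * ε) ≤
    (1/4) * ∑ x : Bit, ∑ z : Bit, ((Qxz0 x z * applyCh K (rhoXZ ψ x z)).trace).re

end BHRD

namespace BHRD

variable {dH dR : ℕ}

/-- The candidate EFI state `ρ̄₀ = (1/4)·Σ_{x,z} ρ^{xz} ⊗ |x,z⟩⟨x,z|` on `B ⊗ R ⊗ ℂ⁴`. -/
def rbar0 (ψ : Fin dH × Bit × Fin dR → ℂ) :
    Matrix ((Bit × Fin dR) × Bit × Bit) ((Bit × Fin dR) × Bit × Bit) ℂ :=
  (1/4 : ℂ) • ∑ x : Bit, ∑ z : Bit,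
    Matrix.of fun p q =>
      (if p.2 = (x, z) ∧ q.2 = (x, z) then 1 else 0) * rhoXZ ψ x z p.1 q.1

/-- The candidate EFI state `ρ̄₁ = ((1/4)·Σ_{x,z} ρ^{xz}) ⊗ (I₄/4)` on `B ⊗ R ⊗ ℂ⁴`. -/
def rbar1 (ψ : Fin dH × Bit × Fin dR → ℂ) :
    Matrix ((Bit × Fin dR) × Bit × Bit) ((Bit × Fin dR) × Bit × Bit) ℂ :=
  (1/16 : ℂ) • ∑ x : Bit, ∑ z : Bit,
    Matrix.of fun p q =>
      (if p.2 = q.2 then 1 else 0) * rhoXZ ψ x z p.1 q.1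

end BHRD

namespace BHRD

variable {dR k : ℕ}

def bigQ : Matrix (((Bit × Bit) × Bit) × (Bit × Bit)) (((Bit × Bit) × Bit) × (Bit × Bit)) ℂ :=
  Matrix.diagonal fun p => if p.1.1 = p.2 ∧ p.1.2 = 0 then 1 else 0

def bigL (S : Fin k → Matrix ((Bit × Bit) × Bit) (Bit × Fin dR) ℂ) (i : Fin k) :
    Matrix (((Bit × Bit) × Bit) × (Bit × Bit)) ((Bit × Fin dR) × (Bit × Bit)) ℂ :=
  Matrix.of fun p q => if p.2 = q.2 then S i p.1 q.1 else 0

def M0 (S : Fin k → Matrix ((Bit × Bit) × Bit) (Bit × Fin dR) ℂ) :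
    Matrix ((Bit × Fin dR) × (Bit × Bit)) ((Bit × Fin dR) × (Bit × Bit)) ℂ :=
  ∑ i, (bigL S i)ᴴ * bigQ * bigL S i

lemma LQL_apply (S : Fin k → Matrix ((Bit × Bit) × Bit) (Bit × Fin dR) ℂ) (i : Fin k)
    (p q : (Bit × Fin dR) × (Bit × Bit)) :
    ((bigL S i)ᴴ * bigQ * bigL S i) p q
      = if p.2 = q.2 then (starRingEnd ℂ) (S i (p.2, 0) p.1) * S i (p.2, 0) q.1 else 0 := by
  have e1 : ((bigL S i)ᴴ * bigQ * bigL S i) p q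
      = ∑ s : ((Bit × Bit) × Bit) × (Bit × Bit),
          (star (bigL S i s p) * (if s.1.1 = s.2 ∧ s.1.2 = 0 then 1 else 0)) * bigL S i s q := by
    rw [Matrix.mul_apply]
    refine Finset.sum_congr rfl fun s _ => ?_
    rw [bigQ, Matrix.mul_diagonal, conjTranspose_apply]
  rw [e1]
  by_cases h : p.2 = q.2
  · rw [if_pos h]
    rw [Fintype.sum_eq_single (((p.2, 0), p.2) : ((Bit × Bit) × Bit) × (Bit × Bit))]
    · simp [bigL, h]
    · rintro ⟨⟨a, f⟩, c⟩ hs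
      simp only [bigL, Matrix.of_apply]
      by_cases hc : c = p.2
      · subst hc
        by_cases haf : a = p.2 ∧ f = 0
        · exact absurd (by simp [haf.1, haf.2]) hs
        · rw [if_neg haf]; ring
      · rw [if_neg hc]; simp
  · rw [if_neg h]
    apply Finset.sum_eq_zero
    rintro ⟨⟨a, f⟩, c⟩ _
    simp only [bigL, Matrix.of_apply]
    by_cases hc : c = p.2
    · subst hc
      rw [if_neg h]; ring
    · rw [if_neg hc]; simp

lemma SQS_apply (S : Fin k → Matrix ((Bit × Bit) × Bit) (Bit × Fin dR) ℂ) (i : Fin k)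
    (x z : Bit) (p q : Bit × Fin dR) :
    ((S i)ᴴ * Qxz0 x z * S i) p q
      = (starRingEnd ℂ) (S i ((x, z), 0) p) * S i ((x, z), 0) q := by
  have h1 : ∀ s, ((S i)ᴴ * Qxz0 x z) p s
      = if s = ((x, z), 0) then (starRingEnd ℂ) (S i ((x, z), 0) p) else 0 := by
    intro s
    rw [Matrix.mul_apply]
    by_cases hs : s = ((x, z), 0)
    · subst hs
      rw [if_pos rfl, Fintype.sum_eq_single (((x, z), 0) : (Bit × Bit) × Bit)]
      · simp [Qxz0]
      · intro r hr; simp [Qxz0, hr]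
    · rw [if_neg hs]
      apply Finset.sum_eq_zero
      intro r _; simp [Qxz0, hs]
  rw [Matrix.mul_apply, Fintype.sum_eq_single (((x, z), 0) : (Bit × Bit) × Bit)]
  · rw [h1]; simp
  · intro r hr; rw [h1, if_neg hr, zero_mul]

lemma M0_apply (S : Fin k → Matrix ((Bit × Bit) × Bit) (Bit × Fin dR) ℂ)
    (p q : (Bit × Fin dR) × (Bit × Bit)) :
    M0 S p q = if p.2 = q.2 then
      (∑ i, (S i)ᴴ * Qxz0 p.2.1 p.2.2 * S i) p.1 q.1 else 0 := by
  rw [M0, Matrix.sum_apply, Matrix.sum_apply]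
  by_cases h : p.2 = q.2
  · rw [if_pos h]
    refine Finset.sum_congr rfl fun i _ => ?_
    rw [LQL_apply, if_pos h, SQS_apply]
  · rw [if_neg h]
    apply Finset.sum_eq_zero
    intro i _
    rw [LQL_apply, if_neg h]

lemma bigL_kraus {S : Fin k → Matrix ((Bit × Bit) × Bit) (Bit × Fin dR) ℂ}
    (hK : IsKraus S) : ∑ i, (bigL S i)ᴴ * bigL S i = 1 := by
  ext p q
  rw [Matrix.sum_apply]
  have e : ∀ i, ((bigL S i)ᴴ * bigL S i) p q
      = if p.2 = q.2 then ((S i)ᴴ * S i) p.1 q.1 else 0 := by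
    intro i
    rw [Matrix.mul_apply]
    by_cases h : p.2 = q.2
    · rw [if_pos h, Matrix.mul_apply, Fintype.sum_prod_type]
      refine Finset.sum_congr rfl fun a _ => ?_
      rw [Fintype.sum_eq_single p.2]
      · simp [bigL, h]
      · intro c hc; simp [bigL, fun hh : c = p.2 => hc hh]
    · rw [if_neg h]
      apply Finset.sum_eq_zero
      rintro ⟨a, c⟩ _
      by_cases hc : c = p.2
      · subst hc; simp [bigL, h]
      · simp [bigL, hc]
  simp only [e]
  by_cases h : p.2 = q.2
  · simp only [if_pos h, ← Matrix.sum_apply]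
    rw [show (∑ i, (S i)ᴴ * S i) = 1 from hK]
    simp [Matrix.one_apply, Prod.ext_iff, h]
  · simp [Matrix.one_apply, Prod.ext_iff, h]

lemma QF0_eq_sum : (∑ x : Bit, ∑ z : Bit, Qxz0 x z) = QF0 := by
  ext ⟨⟨px, pz⟩, pf⟩ ⟨⟨qx, qz⟩, qf⟩
  simp only [Matrix.sum_apply, Qxz0, QF0, Matrix.of_apply, Prod.mk.injEq]
  by_cases hp : px = qx ∧ pz = qz ∧ pf = 0 ∧ qf = 0
  · obtain ⟨h1, h2, h3, h4⟩ := hp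
    subst h1; subst h2; subst h3; subst h4
    rw [Finset.sum_eq_single px]
    · rw [Finset.sum_eq_single pz]
      · simp
      · intro b _ hb; rw [if_neg (by simp [Ne.symm hb])]
      · simp
    · intro b _ hb; apply Finset.sum_eq_zero; intro z _
      rw [if_neg (by simp [Ne.symm hb])]
    · simp
  · rw [if_neg (by tauto), Finset.sum_eq_zero]
    intro x _
    apply Finset.sum_eq_zero
    intro z _
    rw [if_neg (by rintro ⟨⟨⟨h1,h2⟩,h3⟩,⟨⟨h4,h5⟩,h6⟩⟩; exact hp ⟨h1.trans h4.symm, h2.trans h5.symm, h3, h6⟩)]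

lemma trace_conj (S : Fin k → Matrix ((Bit × Bit) × Bit) (Bit × Fin dR) ℂ)
    (Q : Matrix ((Bit × Bit) × Bit) ((Bit × Bit) × Bit) ℂ)
    (ρ : Matrix (Bit × Fin dR) (Bit × Fin dR) ℂ) :
    ((∑ i, (S i)ᴴ * Q * S i) * ρ).trace = (Q * applyCh S ρ).trace := by
  rw [applyCh, Finset.mul_sum, Finset.sum_mul, Matrix.trace_sum, Matrix.trace_sum]
  refine Finset.sum_congr rfl fun i _ => ?_
  calc ((S i)ᴴ * Q * S i * ρ).trace
      = ((S i)ᴴ * (Q * S i * ρ)).trace := by simp only [Matrix.mul_assoc]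
    _ = ((Q * S i * ρ) * (S i)ᴴ).trace := Matrix.trace_mul_comm _ _
    _ = (Q * (S i * ρ * (S i)ᴴ)).trace := by simp only [Matrix.mul_assoc]

lemma trace_M0_E (S : Fin k → Matrix ((Bit × Bit) × Bit) (Bit × Fin dR) ℂ)
    (ρ : Matrix (Bit × Fin dR) (Bit × Fin dR) ℂ) (x z : Bit) :
    ((M0 S) * (Matrix.of fun (p q : (Bit × Fin dR) × (Bit × Bit)) =>
        (if p.2 = (x, z) ∧ q.2 = (x, z) then 1 else 0) * ρ p.1 q.1)).trace
      = (Qxz0 x z * applyCh S ρ).trace := by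
  rw [← trace_conj S (Qxz0 x z) ρ]
  calc ((M0 S) * (Matrix.of fun (p q : (Bit × Fin dR) × (Bit × Bit)) =>
        (if p.2 = (x, z) ∧ q.2 = (x, z) then 1 else 0) * ρ p.1 q.1)).trace
      = ∑ p1 : Bit × Fin dR, ∑ c : Bit × Bit, ∑ q1 : Bit × Fin dR, ∑ c' : Bit × Bit,
          M0 S (p1, c) (q1, c') *
            ((if c' = (x, z) ∧ c = (x, z) then 1 else 0) * ρ q1 p1) := by
        simp only [Matrix.trace, Matrix.diag, Matrix.mul_apply, Fintype.sum_prod_type,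
          Matrix.of_apply]
    _ = ∑ p1 : Bit × Fin dR, ∑ q1 : Bit × Fin dR,
          ((∑ i, (S i)ᴴ * Qxz0 x z * S i) p1 q1) * ρ q1 p1 := by
        refine Finset.sum_congr rfl fun p1 _ => ?_
        rw [Finset.sum_comm]
        refine Finset.sum_congr rfl fun q1 _ => ?_
        rw [Fintype.sum_eq_single ((x, z) : Bit × Bit)]
        · rw [Fintype.sum_eq_single ((x, z) : Bit × Bit)]
          · rw [M0_apply]; simp
          · intro c' hc'; simp [hc']
        · intro c hc
          apply Finset.sum_eq_zero
          intro c' _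
          simp [hc]
    _ = ((∑ i, (S i)ᴴ * Qxz0 x z * S i) * ρ).trace := by
        simp only [Matrix.trace, Matrix.diag, Matrix.mul_apply]

lemma trace_M0_D (S : Fin k → Matrix ((Bit × Bit) × Bit) (Bit × Fin dR) ℂ)
    (ρ : Matrix (Bit × Fin dR) (Bit × Fin dR) ℂ) :
    ((M0 S) * (Matrix.of fun (p q : (Bit × Fin dR) × (Bit × Bit)) =>
        (if p.2 = q.2 then 1 else 0) * ρ p.1 q.1)).trace
      = (QF0 * applyCh S ρ).trace := by
  rw [← QF0_eq_sum]
  simp only [Finset.sum_mul, Matrix.trace_sum]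
  have rw1 : ∀ x z : Bit, (Qxz0 x z * applyCh S ρ).trace
      = ((∑ i, (S i)ᴴ * Qxz0 x z * S i) * ρ).trace := fun x z => (trace_conj S _ ρ).symm
  simp only [rw1]
  calc ((M0 S) * (Matrix.of fun (p q : (Bit × Fin dR) × (Bit × Bit)) =>
        (if p.2 = q.2 then 1 else 0) * ρ p.1 q.1)).trace
      = ∑ p1 : Bit × Fin dR, ∑ c : Bit × Bit, ∑ q1 : Bit × Fin dR, ∑ c' : Bit × Bit,
          M0 S (p1, c) (q1, c') * ((if c' = c then 1 else 0) * ρ q1 p1) := by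
        simp only [Matrix.trace, Matrix.diag, Matrix.mul_apply, Fintype.sum_prod_type,
          Matrix.of_apply]
    _ = ∑ p1 : Bit × Fin dR, ∑ c : Bit × Bit, ∑ q1 : Bit × Fin dR,
          ((∑ i, (S i)ᴴ * Qxz0 c.1 c.2 * S i) p1 q1) * ρ q1 p1 := by
        refine Finset.sum_congr rfl fun p1 _ => Finset.sum_congr rfl fun c _ =>
          Finset.sum_congr rfl fun q1 _ => ?_
        rw [Fintype.sum_eq_single c]
        · rw [M0_apply]; simp
        · intro c' hc'; simp [hc']
    _ = ∑ x : Bit, ∑ z : Bit, ((∑ i, (S i)ᴴ * Qxz0 x z * S i) * ρ).trace := by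
        rw [Finset.sum_comm]
        simp only [Matrix.trace, Matrix.diag, Matrix.mul_apply, Fintype.sum_prod_type]

lemma psd_sum {n : Type*} [Fintype n] {ι : Type*} (s : Finset ι) (f : ι → Matrix n n ℂ)
    (h : ∀ i ∈ s, (f i).PosSemidef) : (∑ i ∈ s, f i).PosSemidef :=
  Finset.sum_induction f _ (fun _ _ ha hb => ha.add hb) Matrix.PosSemidef.zero h

lemma bigQ_psd : (bigQ).PosSemidef := by
  rw [bigQ]
  refine Matrix.posSemidef_diagonal_iff.mpr fun i => ?_
  split <;> simp

lemma one_sub_bigQ_psd : ((1 : Matrix _ _ ℂ) - bigQ).PosSemidef := by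
  rw [bigQ, ← Matrix.diagonal_one, Matrix.diagonal_sub]
  refine Matrix.posSemidef_diagonal_iff.mpr fun i => ?_
  split <;> norm_num

lemma M0_psd (S : Fin k → Matrix ((Bit × Bit) × Bit) (Bit × Fin dR) ℂ) :
    (M0 S).PosSemidef :=
  psd_sum _ _ fun i _ => bigQ_psd.conjTranspose_mul_mul_same (bigL S i)

lemma one_sub_M0 {S : Fin k → Matrix ((Bit × Bit) × Bit) (Bit × Fin dR) ℂ}
    (hK : IsKraus S) :
    (1 : Matrix _ _ ℂ) - M0 S = ∑ i, (bigL S i)ᴴ * (1 - bigQ) * bigL S i := by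
  have e : ∀ i : Fin k, (bigL S i)ᴴ * (1 - bigQ) * bigL S i
      = (bigL S i)ᴴ * bigL S i - (bigL S i)ᴴ * bigQ * bigL S i := by
    intro i
    rw [Matrix.mul_sub, Matrix.mul_one, Matrix.sub_mul]
  rw [Finset.sum_congr rfl fun i _ => e i, Finset.sum_sub_distrib, bigL_kraus hK, M0]

lemma one_sub_M0_psd {S : Fin k → Matrix ((Bit × Bit) × Bit) (Bit × Fin dR) ℂ}
    (hK : IsKraus S) : ((1 : Matrix _ _ ℂ) - M0 S).PosSemidef := by
  rw [one_sub_M0 hK]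
  exact psd_sum _ _ fun i _ => one_sub_bigQ_psd.conjTranspose_mul_mul_same (bigL S i)

lemma trace_E_self (ρ : Matrix (Bit × Fin dR) (Bit × Fin dR) ℂ) (x z : Bit) :
    (Matrix.of fun (p q : (Bit × Fin dR) × (Bit × Bit)) =>
        (if p.2 = (x, z) ∧ q.2 = (x, z) then 1 else 0) * ρ p.1 q.1).trace = ρ.trace := by
  simp [Matrix.trace, Matrix.diag, Fintype.sum_prod_type]

lemma trace_D_self (ρ : Matrix (Bit × Fin dR) (Bit × Fin dR) ℂ) :
    (Matrix.of fun (p q : (Bit × Fin dR) × (Bit × Bit)) =>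
        (if p.2 = q.2 then 1 else 0) * ρ p.1 q.1).trace = 4 * ρ.trace := by
  simp [Matrix.trace, Matrix.diag, Fintype.sum_prod_type, Finset.mul_sum]

/-- a `(1, 1-η)`-superdense decoder against `|ψ⟩` yields a statistical
distinguisher with advantage at least `(3/4)(1-η)` between the candidate EFI pair
`(ρ̄₀, ρ̄₁)` built from `|ψ⟩`. -/
theorem strong_superdense_decoder_implies_statistical_distinguisher
    (dH dR : ℕ) (hdH : 1 ≤ dH) (hdR : 1 ≤ dR)
    (ψ : Fin dH × Bit × Fin dR → ℂ)
    (hψ : ∑ p, Complex.normSq (ψ p) = 1)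
    (η : ℝ) (hη : η ∈ Set.Icc (0:ℝ) 1)
    (hdec : ∃ (k : ℕ) (S : Fin k → Matrix ((Bit × Bit) × Bit) (Bit × Fin dR) ℂ),
      IsSupDecoder ψ 1 (1 - η) S) :
    ∃ M : Matrix ((Bit × Fin dR) × Bit × Bit) ((Bit × Fin dR) × Bit × Bit) ℂ,
      M.PosSemidef ∧ (1 - M).PosSemidef ∧
      (3/4) * (1 - η) ≤ ((M * (rbar1 ψ - rbar0 ψ)).trace).re := by
  obtain ⟨k, S, hK, hγ, hε⟩ := hdec
  refine ⟨1 - M0 S, one_sub_M0_psd hK, by simpa [sub_sub_cancel] using M0_psd S, ?_⟩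
  have t0 : (M0 S * rbar0 ψ).trace
      = (1/4 : ℂ) * ∑ x : Bit, ∑ z : Bit,
          (Qxz0 x z * applyCh S (rhoXZ ψ x z)).trace := by
    rw [rbar0, Matrix.mul_smul, Matrix.trace_smul, smul_eq_mul]
    congr 1
    simp only [Matrix.mul_sum, Matrix.trace_sum, trace_M0_E]
  have t1 : (M0 S * rbar1 ψ).trace
      = (1/16 : ℂ) * ∑ x : Bit, ∑ z : Bit,
          (QF0 * applyCh S (rhoXZ ψ x z)).trace := by
    rw [rbar1, Matrix.mul_smul, Matrix.trace_smul, smul_eq_mul]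
    congr 1
    simp only [Matrix.mul_sum, Matrix.trace_sum, trace_M0_D]
  have t2 : (rbar1 ψ - rbar0 ψ).trace = 0 := by
    simp only [Matrix.trace_sub, rbar0, rbar1, Matrix.trace_smul, Matrix.trace_sum,
      trace_E_self, trace_D_self, smul_eq_mul, ← Finset.mul_sum]
    ring
  have key : ((1 - M0 S) * (rbar1 ψ - rbar0 ψ)).trace
      = (1/4 : ℂ) * (∑ x : Bit, ∑ z : Bit,
            (Qxz0 x z * applyCh S (rhoXZ ψ x z)).trace)
        - (1/16 : ℂ) * (∑ x : Bit, ∑ z : Bit,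
            (QF0 * applyCh S (rhoXZ ψ x z)).trace) := by
    rw [Matrix.sub_mul, Matrix.one_mul, Matrix.trace_sub, t2, Matrix.mul_sub,
      Matrix.trace_sub, t0, t1]
    ring
  have c4 : (1/4 : ℂ) = ((1/4 : ℝ) : ℂ) := by norm_num
  have c16 : (1/16 : ℂ) = ((1/16 : ℝ) : ℂ) := by norm_num
  rw [key, c4, c16, Complex.sub_re, Complex.re_ofReal_mul, Complex.re_ofReal_mul]
  simp only [Complex.re_sum]
  nlinarith [hε, hγ, hη.2,
    mul_nonneg (sub_nonneg.2 hγ) (sub_nonneg.2 hη.2)]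


end BHRD
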